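/- Projecting the first tensor factor of the N-level singlet |S_N⟩ onto a standard basis vector e_i yields (up to normalization and sign) the product e_i ⊗ |S_{N−1}^{(i)}⟩, where |S_{N−1}^{(i)}⟩ is the (N−1)-party singlet on the levels {1,…,N}∖{i}; moreover each outcome i occurs with probability 1/N. -/

import Mathlib

/-- The `N`-level singlet `(1/√N!) Σ_{σ∈S_N} sgn(σ) e_{σ(1)} ⊗ ⋯ ⊗ e_{σ(N)}`. -/
noncomputable def singlet (N : ℕ) : EuclideanSpace ℂ (Fin N → Fin N) :=
  ((Real.sqrt N.factorial : ℂ))⁻¹ • ∑ σ : Equiv.Perm (Fin N),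
    ((Equiv.Perm.sign σ : ℤ) : ℂ) • EuclideanSpace.single (⇑σ) (1 : ℂ)

/-- The order-preserving enumeration of `{1,…,N} ∖ {i}` by `Fin (N-1)`. -/
noncomputable def missing {N : ℕ} (i : Fin N) : Fin (N - 1) → Fin N :=
  fun j => (Finset.univ.erase i).orderEmbOfFin
    (by simp [Finset.card_erase_of_mem]) j

/-- The `(N−1)`-party singlet `|S_{N−1}^{(i)}⟩` built from `{e_l : l ≠ i}`. -/
noncomputable def subSinglet {N : ℕ} (i : Fin N) :
    EuclideanSpace ℂ (Fin (N - 1) → Fin N) :=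
  ((Real.sqrt (N - 1).factorial : ℂ))⁻¹ • ∑ τ : Equiv.Perm (Fin (N - 1)),
    ((Equiv.Perm.sign τ : ℤ) : ℂ) •
      EuclideanSpace.single (fun j => missing i (τ j)) (1 : ℂ)

/-- The product state `e_i ⊗ χ` in `(ℂ^N)^{⊗N}`. -/
noncomputable def prodState {N : ℕ} (hN : 0 < N) (i : Fin N)
    (χ : EuclideanSpace ℂ (Fin (N - 1) → Fin N)) :
    EuclideanSpace ℂ (Fin N → Fin N) :=
  WithLp.toLp 2 fun f => (if f ⟨0, hN⟩ = i then 1 else 0) *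
    χ (fun j => f ⟨j.1 + 1, by have := j.2; omega⟩)

/-- The projection `|e_i⟩⟨e_i| ⊗ I^{⊗(N−1)}` applied to `ψ`. -/
noncomputable def projFirstStd {d N : ℕ} (hN : 0 < N) (i : Fin d)
    (ψ : EuclideanSpace ℂ (Fin N → Fin d)) : EuclideanSpace ℂ (Fin N → Fin d) :=
  WithLp.toLp 2 fun f => if f ⟨0, hN⟩ = i then ψ f else 0

open Equiv Equiv.Perm Finset

section Aux

lemma SP11.missing_eq {m : ℕ} (i : Fin (m+1)) : missing i = Fin.succAbove i := by
  funext j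
  exact (congrFun (Finset.orderEmbOfFin_unique (by simp [Finset.card_erase_of_mem])
    (fun x => Finset.mem_erase.2 ⟨Fin.succAbove_ne i x, Finset.mem_univ _⟩)
    (Fin.strictMono_succAbove i)) j).symm

/-- The permutation of `Fin (m+1)` sending `0 ↦ i` and `j.succ ↦ i.succAbove (τ j)`. -/
noncomputable def SP11.phi {m : ℕ} (i : Fin (m+1)) (τ : Perm (Fin m)) : Perm (Fin (m+1)) :=
  (Equiv.Perm.decomposeFin.symm (0, τ)).trans i.cycleRange.symm

@[simp] lemma SP11.phi_zero {m : ℕ} (i : Fin (m+1)) (τ : Perm (Fin m)) : phi i τ 0 = i := by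
  simp [phi]

@[simp] lemma SP11.phi_succ {m : ℕ} (i : Fin (m+1)) (τ : Perm (Fin m)) (j : Fin m) :
    phi i τ j.succ = i.succAbove (τ j) := by
  simp [phi]

lemma SP11.phi_sign {m : ℕ} (i : Fin (m+1)) (τ : Perm (Fin m)) :
    Perm.sign (phi i τ) = (-1) ^ (i : ℕ) * Perm.sign τ := by
  have h : phi i τ = i.cycleRange.symm * Equiv.Perm.decomposeFin.symm (0, τ) := rfl
  rw [h, map_mul]
  rw [Equiv.Perm.decomposeFin.symm_sign, if_pos rfl, one_mul]
  congr 1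
  rw [← Fin.sign_cycleRange i]
  exact Equiv.Perm.sign_symm _

lemma SP11.exists_phi {m : ℕ} (i : Fin (m+1)) (σ₀ : Perm (Fin (m+1))) (h : σ₀ 0 = i) :
    ∃ e, σ₀ = phi i e := by
  set ρ := σ₀.trans i.cycleRange with hρ
  rcases hp : Equiv.Perm.decomposeFin ρ with ⟨p, e⟩
  have hsymm : Equiv.Perm.decomposeFin.symm (p, e) = ρ := by
    rw [← hp]; exact Equiv.Perm.decomposeFin.symm_apply_apply ρ
  have hρ0 : ρ 0 = 0 := by
    simp [hρ, Equiv.trans_apply, h, Fin.cycleRange_self]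
  have hp0 : p = 0 := by
    rw [← hsymm] at hρ0; simpa using hρ0
  refine ⟨e, Equiv.ext fun x => ?_⟩
  have h2 : phi i e = ρ.trans i.cycleRange.symm := by
    rw [phi, ← hp0, hsymm]
  rw [h2]
  simp [hρ, Equiv.trans_apply]

lemma SP11.key_sum {m : ℕ} (i : Fin (m+1)) (f : Fin (m+1) → Fin (m+1)) (hf : f 0 = i) :
    ∑ σ : Perm (Fin (m+1)), ((Perm.sign σ : ℤ) : ℂ) * (if f = ⇑σ then 1 else 0)
    = (-1) ^ (i:ℕ) * ∑ τ : Perm (Fin m), ((Perm.sign τ : ℤ) : ℂ) *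
        (if (fun j => f j.succ) = (fun j => i.succAbove (τ j)) then 1 else 0) := by
  by_cases hbij : ∃ σ₀ : Perm (Fin (m+1)), f = ⇑σ₀
  · obtain ⟨σ₀, rfl⟩ := hbij
    obtain ⟨e, rfl⟩ := exists_phi i σ₀ hf
    rw [Fintype.sum_eq_single (phi i e) (fun σ hσ => by
      rw [if_neg fun h => hσ (Equiv.coe_fn_injective h).symm, mul_zero])]
    rw [Fintype.sum_eq_single e (fun τ hτ => by
      rw [if_neg fun h => hτ (Equiv.ext fun j =>
        i.succAbove_right_injective (by simpa [phi_succ] using (congrFun h j).symm)), mul_zero])]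
    have h1 : (fun j => (phi i e) j.succ) = (fun j => i.succAbove (e j)) :=
      funext (phi_succ i e)
    rw [if_pos rfl, if_pos h1, phi_sign]
    push_cast
    ring
  · have L : ∀ σ : Perm (Fin (m+1)),
        ((Perm.sign σ : ℤ) : ℂ) * (if f = ⇑σ then 1 else 0) = 0 := fun σ => by
      rw [if_neg fun h => hbij ⟨σ, h⟩, mul_zero]
    have R : ∀ τ : Perm (Fin m), ((Perm.sign τ : ℤ) : ℂ) *
        (if (fun j => f j.succ) = (fun j => i.succAbove (τ j)) then 1 else 0) = 0 := fun τ => by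
      rw [if_neg, mul_zero]
      intro h
      refine hbij ⟨phi i τ, funext fun x => ?_⟩
      refine Fin.cases ?_ (fun j => ?_) x
      · rw [hf, phi_zero]
      · rw [phi_succ]; exact congrFun h j
    simp only [L, R, Finset.sum_const_zero, mul_zero]

lemma SP11.euclid_sum_apply {ι κ : Type*} (s : Finset κ) (g : κ → EuclideanSpace ℂ ι) (x : ι) :
    (∑ t ∈ s, g t) x = ∑ t ∈ s, g t x :=
  by rw [WithLp.ofLp_sum, Finset.sum_apply]

lemma SP11.singlet_apply (N : ℕ) (f : Fin N → Fin N) :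
    singlet N f = ((Real.sqrt N.factorial : ℂ))⁻¹ *
      ∑ σ : Perm (Fin N), ((Perm.sign σ : ℤ) : ℂ) * (if f = ⇑σ then 1 else 0) := by
  simp only [singlet, PiLp.smul_apply, smul_eq_mul, euclid_sum_apply,
    EuclideanSpace.single_apply]

lemma SP11.subSinglet_apply {m : ℕ} (i : Fin (m+1)) (g : Fin m → Fin (m+1)) :
    subSinglet i g = ((Real.sqrt m.factorial : ℂ))⁻¹ *
      ∑ τ : Perm (Fin m), ((Perm.sign τ : ℤ) : ℂ) *
        (if g = (fun j => i.succAbove (τ j)) then 1 else 0) := by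
  simp only [subSinglet, missing_eq, PiLp.smul_apply, smul_eq_mul, euclid_sum_apply,
    EuclideanSpace.single_apply]
  rfl

lemma SP11.prodState_apply {m : ℕ} (hN : 0 < m + 1) (i : Fin (m+1))
    (χ : EuclideanSpace ℂ (Fin m → Fin (m+1))) (f : Fin (m+1) → Fin (m+1)) :
    prodState hN i χ f = (if f 0 = i then 1 else 0) * χ (fun j => f j.succ) :=
  rfl

lemma SP11.sum_sq_ite {ι κ : Type*} [Fintype ι] [Fintype κ] [DecidableEq ι] (u : κ → ι)
    (hu : Function.Injective u) (c : κ → ℂ) (hc : ∀ τ, ‖c τ‖ = 1) :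
    ∑ x : ι, ‖∑ τ : κ, c τ * (if x = u τ then 1 else 0)‖ ^ 2 = (Fintype.card κ : ℝ) := by
  classical
  rw [← Finset.sum_subset (Finset.subset_univ (Finset.univ.image u))]
  · rw [Finset.sum_image (fun a _ b _ h => hu h)]
    have key : ∀ τ₀ : κ, ‖∑ τ : κ, c τ * (if u τ₀ = u τ then 1 else 0)‖ ^ 2 = 1 := by
      intro τ₀
      rw [Fintype.sum_eq_single τ₀ (fun τ hτ => by
        rw [if_neg fun h => hτ (hu h).symm, mul_zero])]
      rw [if_pos rfl, mul_one, hc, one_pow]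
    rw [Finset.sum_congr rfl fun τ₀ _ => key τ₀]
    simp [Finset.card_univ]
  · intro x _ hx
    have h0 : (∑ τ : κ, c τ * (if x = u τ then 1 else 0)) = 0 :=
      Finset.sum_eq_zero fun τ _ => by
        rw [if_neg fun h => hx (Finset.mem_image.2 ⟨τ, Finset.mem_univ _, h.symm⟩), mul_zero]
    rw [h0]
    simp

lemma SP11.subSinglet_normsq {m : ℕ} (i : Fin (m+1)) :
    ∑ g : Fin m → Fin (m+1), ‖subSinglet i g‖ ^ 2 = 1 := by
  have hu : Function.Injective (fun τ : Perm (Fin m) => (fun j => i.succAbove (τ j))) := by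
    intro τ τ' h
    exact Equiv.coe_fn_injective (funext fun j =>
      i.succAbove_right_injective (congrFun h j))
  have hc : ∀ τ : Perm (Fin m), ‖((Perm.sign τ : ℤ) : ℂ)‖ = 1 := fun τ => by
    rcases Int.units_eq_one_or (Perm.sign τ) with h | h <;> simp [h]
  have := sum_sq_ite _ hu _ hc
  calc ∑ g : Fin m → Fin (m+1), ‖subSinglet i g‖ ^ 2
      = ∑ g : Fin m → Fin (m+1), ‖((Real.sqrt m.factorial : ℂ))⁻¹‖ ^ 2 *
          ‖∑ τ : Perm (Fin m), ((Perm.sign τ : ℤ) : ℂ) *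
            (if g = (fun j => i.succAbove (τ j)) then 1 else 0)‖ ^ 2 := by
        refine Finset.sum_congr rfl fun g _ => ?_
        rw [subSinglet_apply, norm_mul, mul_pow]
    _ = ‖((Real.sqrt m.factorial : ℂ))⁻¹‖ ^ 2 * (Fintype.card (Perm (Fin m)) : ℝ) := by
        rw [← Finset.mul_sum, this]
    _ = 1 := by
        have hm : (0:ℝ) ≤ m.factorial := by positivity
        rw [Fintype.card_perm, Fintype.card_fin]
        rw [norm_inv, Complex.norm_real, Real.norm_eq_abs, abs_of_nonneg (Real.sqrt_nonneg _),
          inv_pow, Real.sq_sqrt hm]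
        rw [inv_mul_cancel₀]
        exact_mod_cast Nat.factorial_pos m |>.ne'

end Aux

open SP11 in
/-- Projecting the first tensor factor of `|S_N⟩` onto `e_i` yields,
up to normalization and sign, the product `e_i ⊗ |S_{N−1}^{(i)}⟩`; each outcome `i`
occurs with probability `1/N`. -/
theorem singlet_projection_first_factor {N : ℕ} (hN : 0 < N) (i : Fin N) :
    projFirstStd hN i (singlet N) =
      (((-1 : ℂ) ^ (i : ℕ)) * ((Real.sqrt N : ℂ))⁻¹) • prodState hN i (subSinglet i) ∧
    ‖projFirstStd hN i (singlet N)‖ ^ 2 = (N : ℝ)⁻¹ := by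
  obtain ⟨m, rfl⟩ : ∃ m, N = m + 1 := ⟨N - 1, by omega⟩
  have h0 : (⟨0, hN⟩ : Fin (m+1)) = 0 := rfl
  have hsq : Real.sqrt ((m+1).factorial) = Real.sqrt ((m+1 : ℕ)) * Real.sqrt (m.factorial) := by
    rw [Nat.factorial_succ, Nat.cast_mul, Real.sqrt_mul (by positivity)]
  have part1 : projFirstStd hN i (singlet (m+1)) =
      (((-1 : ℂ) ^ (i : ℕ)) * ((Real.sqrt ((m+1 : ℕ)) : ℂ))⁻¹) • prodState hN i (subSinglet i) := by
    ext f
    show (if f ⟨0, hN⟩ = i then singlet (m+1) f else 0) = _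
    rw [PiLp.smul_apply, smul_eq_mul, prodState_apply, h0]
    by_cases hf : f 0 = i
    · rw [if_pos hf, if_pos hf, singlet_apply, key_sum i f hf,
        subSinglet_apply i (fun j => f j.succ), hsq]
      push_cast
      ring
    · rw [if_neg hf, if_neg hf]
      ring
  refine ⟨part1, ?_⟩
  rw [part1, norm_smul]
  have hnc : ‖((-1 : ℂ) ^ (i : ℕ)) * ((Real.sqrt ((m+1 : ℕ)) : ℂ))⁻¹‖ ^ 2 = ((m : ℝ) + 1)⁻¹ := by
    rw [norm_mul, norm_pow, norm_neg, norm_one, one_pow, one_mul, norm_inv, Complex.norm_real,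
      Real.norm_eq_abs, abs_of_nonneg (Real.sqrt_nonneg _), inv_pow, Real.sq_sqrt (by positivity)]
    push_cast
    ring
  have hnv : ‖prodState hN i (subSinglet i)‖ ^ 2 = 1 := by
    rw [EuclideanSpace.norm_eq, Real.sq_sqrt (Finset.sum_nonneg fun _ _ => by positivity)]
    rw [← Equiv.sum_comp (Fin.consEquiv (fun _ : Fin (m+1) => Fin (m+1)))
      (fun f => ‖prodState hN i (subSinglet i) f‖ ^ 2)]
    rw [Fintype.sum_prod_type]
    have hterm : ∀ (a : Fin (m+1)) (g : Fin m → Fin (m+1)),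
        ‖prodState hN i (subSinglet i) ((Fin.consEquiv (fun _ : Fin (m+1) => Fin (m+1))) (a, g))‖ ^ 2
        = (if a = i then 1 else 0) * ‖subSinglet i g‖ ^ 2 := by
      intro a g
      rw [prodState_apply]
      have h1 : (Fin.consEquiv (fun _ : Fin (m+1) => Fin (m+1))) (a, g) 0 = a := by
        simp [Fin.consEquiv]
      have h2 : (fun j => (Fin.consEquiv (fun _ : Fin (m+1) => Fin (m+1))) (a, g) j.succ) = g :=
        funext fun j => by simp [Fin.consEquiv]
      rw [h1, h2]
      by_cases ha : a = i
      · rw [if_pos ha, if_pos ha, one_mul, one_mul]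
      · rw [if_neg ha, if_neg ha, zero_mul, zero_mul, norm_zero]
        norm_num
    calc ∑ a : Fin (m+1), ∑ g : Fin m → Fin (m+1),
          ‖prodState hN i (subSinglet i) ((Fin.consEquiv (fun _ : Fin (m+1) => Fin (m+1))) (a, g))‖ ^ 2
        = ∑ a : Fin (m+1), (if a = i then 1 else 0) *
            (∑ g : Fin m → Fin (m+1), ‖subSinglet i g‖ ^ 2) := by
          refine Finset.sum_congr rfl fun a _ => ?_
          rw [Finset.mul_sum]
          exact Finset.sum_congr rfl fun g _ => hterm a g
      _ = 1 := by
          rw [subSinglet_normsq]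
          simp
  rw [mul_pow, hnc, hnv, mul_one]
  push_cast
  ring
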